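/- Let n : ℕ. On ℂⁿ × ℂⁿ define the symmetric bilinear form β((x,y),(x',y')) = ∑_i (x i * y' i + y i * x' i) and the hermitian form h((x,y),(x',y')) = ∑_i conj(x i) * x' i − ∑_i conj(y i) * y' i. For Z ∈ Matrix (Fin n) (Fin n) ℂ let W_Z = {(Z *ᵥ w, w) | w ∈ (Fin n → ℂ)}. Then: (a) β vanishes identically on W_Z × W_Z if and only if Z is antisymmetric (Zᵀ = −Z); (b) W_Z is β-isotropic and satisfies h(v,v) < 0 for every nonzero v ∈ W_Z if and only if Zᵀ = −Z and 1 − Zᴴ * Z is positive definite. -/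

import Mathlib

open Matrix
open scoped ComplexOrder

/-- Bounded symmetric domain of `SO*(2n)` inside the `SU(n,n)` domain: the graph `W_Z` is
isotropic for the symmetric form `β` iff `Z` is antisymmetric, and is `β`-isotropic and
`h`-negative definite iff `Zᵀ = −Z` and `1 − Zᴴ Z` is positive definite. -/
theorem stmt_8 (n : ℕ)
    (β h : ((Fin n → ℂ) × (Fin n → ℂ)) → ((Fin n → ℂ) × (Fin n → ℂ)) → ℂ)
    (hβ : ∀ v v', β v v' = ∑ i, (v.1 i * v'.2 i + v.2 i * v'.1 i))
    (hh : ∀ v v', h v v' =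
      (∑ i, starRingEnd ℂ (v.1 i) * v'.1 i) - ∑ i, starRingEnd ℂ (v.2 i) * v'.2 i)
    (Z : Matrix (Fin n) (Fin n) ℂ) :
    ((∀ v ∈ {v : (Fin n → ℂ) × (Fin n → ℂ) | ∃ w, v = (Z *ᵥ w, w)},
        ∀ v' ∈ {v : (Fin n → ℂ) × (Fin n → ℂ) | ∃ w, v = (Z *ᵥ w, w)},
        β v v' = 0) ↔ Z.transpose = -Z) ∧
    (((∀ v ∈ {v : (Fin n → ℂ) × (Fin n → ℂ) | ∃ w, v = (Z *ᵥ w, w)},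
        ∀ v' ∈ {v : (Fin n → ℂ) × (Fin n → ℂ) | ∃ w, v = (Z *ᵥ w, w)},
        β v v' = 0) ∧
      (∀ v ∈ {v : (Fin n → ℂ) × (Fin n → ℂ) | ∃ w, v = (Z *ᵥ w, w)},
        v ≠ 0 → h v v < 0)) ↔
      (Z.transpose = -Z ∧ (1 - Z.conjTranspose * Z).PosDef)) := by
  -- key computation for β
  have βcomp : ∀ w w' : Fin n → ℂ, β (Z *ᵥ w, w) (Z *ᵥ w', w')
      = ((Z + Zᵀ) *ᵥ w) ⬝ᵥ w' := by
    intro w w'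
    rw [hβ, Finset.sum_add_distrib, add_mulVec, add_dotProduct]
    have e1 : ∑ x, (Z *ᵥ w, w).1 x * (Z *ᵥ w', w').2 x = Z *ᵥ w ⬝ᵥ w' := rfl
    have e2 : ∑ x, (Z *ᵥ w, w).2 x * (Z *ᵥ w', w').1 x = Zᵀ *ᵥ w ⬝ᵥ w' := by
      show w ⬝ᵥ (Z *ᵥ w') = _
      rw [dotProduct_mulVec, mulVec_transpose]
    rw [e1, e2]
  have key1 : (∀ v ∈ {v : (Fin n → ℂ) × (Fin n → ℂ) | ∃ w, v = (Z *ᵥ w, w)},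
        ∀ v' ∈ {v : (Fin n → ℂ) × (Fin n → ℂ) | ∃ w, v = (Z *ᵥ w, w)},
        β v v' = 0) ↔ Z.transpose = -Z := by
    constructor
    · intro H
      ext j k
      have h1 := H (Z *ᵥ Pi.single k 1, Pi.single k 1) ⟨_, rfl⟩
        (Z *ᵥ Pi.single j 1, Pi.single j 1) ⟨_, rfl⟩
      rw [βcomp] at h1
      simp [dotProduct, Pi.single_apply, add_mulVec, mulVec_single, transpose_apply] at h1
      simp [transpose_apply]
      linear_combination h1
    · rintro hZ v ⟨w, rfl⟩ v' ⟨w', rfl⟩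
      rw [βcomp]
      have : Z + Zᵀ = 0 := by rw [hZ]; simp
      simp [this]
  -- key computation for h
  have hcomp : ∀ w : Fin n → ℂ, h (Z *ᵥ w, w) (Z *ᵥ w, w)
      = -(star w ⬝ᵥ ((1 - Zᴴ * Z) *ᵥ w)) := by
    intro w
    rw [hh, sub_mulVec, dotProduct_sub, one_mulVec, ← mulVec_mulVec,
      dotProduct_mulVec (star w) Zᴴ, ← star_mulVec]
    simp [dotProduct]
  have hHerm : (1 - Zᴴ * Z).IsHermitian := by
    apply IsHermitian.sub isHermitian_one
    exact isHermitian_conjTranspose_mul_self Z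
  refine ⟨key1, ?_⟩
  constructor
  · rintro ⟨H1, H2⟩
    refine ⟨key1.mp H1, PosDef.of_dotProduct_mulVec_pos hHerm fun w hw => ?_⟩
    have hv : ((Z *ᵥ w, w) : (Fin n → ℂ) × (Fin n → ℂ)) ≠ 0 := by
      simp [Prod.ext_iff]
      intro _; exact hw
    have := H2 (Z *ᵥ w, w) ⟨_, rfl⟩ hv
    rw [hcomp] at this
    exact neg_lt_zero.mp this
  · rintro ⟨hZ, hpd⟩
    refine ⟨key1.mpr hZ, ?_⟩
    rintro v ⟨w, rfl⟩ hv
    have hw : w ≠ 0 := by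
      intro hw0
      apply hv
      simp [hw0]
    have := hpd.dotProduct_mulVec_pos hw
    rw [hcomp]
    exact neg_lt_zero.mpr this
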